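/- For every n ≥ 1, the real Lie algebras g₍₃ₙ₊₂,ₖ₎ for 0 ≤ k ≤ n are pairwise non-isomorphic: if 0 ≤ k < k' ≤ n then g₍₃ₙ₊₂,ₖ₎ and g₍₃ₙ₊₂,ₖ'₎ are not isomorphic as real Lie algebras. -/
import Mathlib


open Module

/-- The bracket relations of the real Lie algebra `g₍₃ₙ₊₂,ₖ₎` with respect to a basis indexed by
`(Fin n × Bool) ⊕ Option (Fin (n+1))`: `Sum.inl (i, false)` is `X₂ᵢ₋₁`, `Sum.inl (i, true)` is
`X₂ᵢ`, `Sum.inr none` is the central element `X₂ₙ₊₁` of the nilradical and `Sum.inr (some j)`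
is `Yⱼ₊₁`. -/
def IsG3n2k (n k : ℕ) {g : Type*} [LieRing g] [LieAlgebra ℝ g]
    (b : Basis ((Fin n × Bool) ⊕ Option (Fin (n + 1))) ℝ g) : Prop :=
  (∀ i : Fin n,
    ⁅b (Sum.inl (i, false)), b (Sum.inl (i, true))⁆ = b (Sum.inr none)) ∧
  (∀ (i j : Fin n) (x y : Bool), i ≠ j →
    ⁅b (Sum.inl (i, x)), b (Sum.inl (j, y))⁆ = 0) ∧
  (∀ (i : Fin n) (x : Bool), ⁅b (Sum.inl (i, x)), b (Sum.inr none)⁆ = 0) ∧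
  (∀ j j' : Fin (n + 1), ⁅b (Sum.inr (some j)), b (Sum.inr (some j'))⁆ = 0) ∧
  (∀ j : Fin (n + 1), ⁅b (Sum.inr (some j)), b (Sum.inr none)⁆ =
    if j.val = n then (2 : ℝ) • b (Sum.inr none) else 0) ∧
  (∀ (j : Fin (n + 1)) (i : Fin n) (x : Bool),
    ⁅b (Sum.inr (some j)), b (Sum.inl (i, x))⁆ =
      if j.val = n then b (Sum.inl (i, x))
      else if j.val = i.val then
        (if j.val < k then
          cond x (-b (Sum.inl (i, false))) (b (Sum.inl (i, true)))
        else
          cond x (-b (Sum.inl (i, true))) (b (Sum.inl (i, false))))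
      else 0)

namespace G3n2kAux

variable {n k : ℕ} {g : Type} [LieRing g] [LieAlgebra ℝ g]
  (b : Basis ((Fin n × Bool) ⊕ Option (Fin (n + 1))) ℝ g)

lemma killing_basis (u v : (Fin n × Bool) ⊕ Option (Fin (n + 1))) :
    killingForm ℝ g (b u) (b v) = ∑ i, b.repr ⁅b u, ⁅b v, b i⁆⁆ i := by
  haveI := Module.Finite.of_basis b
  rw [killingForm_apply_apply, LinearMap.trace_eq_matrix_trace ℝ b, Matrix.trace]
  simp [Matrix.diag, LinearMap.toMatrix_apply, LieAlgebra.ad_apply]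

lemma kX (hg : IsG3n2k n k b) (u v : (Fin n × Bool) ⊕ Option (Fin (n + 1)))
    (hu : ∀ j : Fin (n + 1), u ≠ Sum.inr (some j)) :
    killingForm ℝ g (b u) (b v) = 0 := by
  obtain ⟨h1, h2, h3, h4, h5, h6⟩ := hg
  set Z := b (Sum.inr none) with hZdef
  set N : Submodule ℝ g :=
    Submodule.span ℝ (Set.range (fun p : Fin n × Bool => b (Sum.inl p)) ∪ {Z}) with hNdef
  have hZmem : Z ∈ N := Submodule.subset_span (Or.inr rfl)
  have hXmem : ∀ p : Fin n × Bool, b (Sum.inl p) ∈ N :=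
    fun p => Submodule.subset_span (Or.inl ⟨p, rfl⟩)
  -- every bracket of basis vectors lies in N
  have hbr : ∀ w i : (Fin n × Bool) ⊕ Option (Fin (n + 1)), ⁅b w, b i⁆ ∈ N := by
    have hXX : ∀ p q : Fin n × Bool, ⁅b (Sum.inl p), b (Sum.inl q)⁆ ∈ N := by
      rintro ⟨p, x⟩ ⟨q, y⟩
      by_cases hpq : p = q
      · subst hpq
        cases x <;> cases y
        · simp
        · rw [h1 p]; exact hZmem
        · rw [← lie_skew, h1 p]; exact N.neg_mem hZmem
        · simp
      · rw [h2 p q x y hpq]; exact N.zero_mem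
    have hYX : ∀ (j : Fin (n + 1)) (p : Fin n × Bool),
        ⁅b (Sum.inr (some j)), b (Sum.inl p)⁆ ∈ N := by
      rintro j ⟨p, x⟩
      rw [h6 j p x]
      split_ifs <;> cases x <;>
        first
          | exact hXmem _
          | exact N.neg_mem (hXmem _)
          | exact N.zero_mem
    rintro (p | (_ | j)) (q | (_ | j'))
    · exact hXX p q
    · obtain ⟨q, y⟩ := p; rw [h3 q y]; exact N.zero_mem
    · rw [← lie_skew]; exact N.neg_mem (hYX j' p)
    · rw [← lie_skew]; obtain ⟨q, y⟩ := q; rw [h3 q y]; simpa using N.zero_mem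
    · simp
    · rw [← lie_skew, h5 j']
      split_ifs
      · exact N.neg_mem (N.smul_mem _ hZmem)
      · simpa using N.zero_mem
    · exact hYX j q
    · rw [h5 j]; split_ifs
      · exact N.smul_mem _ hZmem
      · exact N.zero_mem
    · rw [h4 j j']; exact N.zero_mem
  -- bracket of u (an X-type vector) with anything in N lies in the line through Z
  have huZ : ⁅b u, Z⁆ = 0 := by
    rcases u with p | o
    · obtain ⟨p, x⟩ := p; exact h3 p x
    · rcases o with _ | j
      · exact lie_self Z
      · exact absurd rfl (hu j)
  have huN : ∀ m ∈ N, ⁅b u, m⁆ ∈ Submodule.span ℝ {Z} := by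
    intro m hm
    have : N.map ((LieAlgebra.ad ℝ g) (b u)) ≤ Submodule.span ℝ {Z} := by
      rw [hNdef, Submodule.map_span, Submodule.span_le]
      rintro y ⟨z, (⟨p, rfl⟩ | rfl), rfl⟩
      · simp only [LieAlgebra.ad_apply]
        rcases u with q | o
        · obtain ⟨q, y'⟩ := q; obtain ⟨p, x'⟩ := p
          by_cases hqp : q = p
          · subst hqp
            cases y' <;> cases x' <;>
              first
                | (simp only [lie_self]; exact Submodule.zero_mem _)
                | (rw [h1 q]; exact Submodule.mem_span_singleton_self _)
                | (rw [← lie_skew, h1 q];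
                    exact Submodule.neg_mem _ (Submodule.mem_span_singleton_self _))
          · rw [h2 q p y' x' hqp]; exact Submodule.zero_mem _
        · rcases o with _ | j
          · rw [← lie_skew]; obtain ⟨p, x'⟩ := p; rw [h3 p x']
            simpa using Submodule.zero_mem (Submodule.span ℝ {Z})
          · exact absurd rfl (hu j)
      · simp only [LieAlgebra.ad_apply, huZ]; exact Submodule.zero_mem _
    exact this ⟨m, hm, by simp [LieAlgebra.ad_apply]⟩
  rw [killing_basis]
  refine Finset.sum_eq_zero fun i _ => ?_
  rcases eq_or_ne i (Sum.inr none) with rfl | hi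
  · -- the center: ⁅b v, Z⁆ is a multiple of Z, and ⁅b u, Z⁆ = 0
    have hvZ : ⁅b v, Z⁆ ∈ Submodule.span ℝ {Z} := by
      rcases v with p | o
      · obtain ⟨p, x⟩ := p; rw [h3 p x]; exact Submodule.zero_mem _
      · rcases o with _ | j
        · rw [lie_self]; exact Submodule.zero_mem _
        · rw [h5 j]; split_ifs
          · exact Submodule.smul_mem _ _ (Submodule.mem_span_singleton_self _)
          · exact Submodule.zero_mem _
    obtain ⟨c, hc⟩ := Submodule.mem_span_singleton.mp hvZ
    rw [← hc, lie_smul, huZ, smul_zero, map_zero]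
    rfl
  · have : ⁅b u, ⁅b v, b i⁆⁆ ∈ Submodule.span ℝ {Z} := huN _ (hbr v i)
    obtain ⟨c, hc⟩ := Submodule.mem_span_singleton.mp this
    rw [← hc, map_smul, Finsupp.smul_apply, Basis.repr_self_apply]
    simp [Ne.symm hi]


lemma termE (hg : IsG3n2k n k b) (j j' : Fin (n + 1)) (p : Fin n) (x : Bool) :
    b.repr ⁅b (Sum.inr (some j)), ⁅b (Sum.inr (some j')), b (Sum.inl (p, x))⁆⁆
        (Sum.inl (p, x)) =
      if j'.val = n then
        (if j.val = n then 1 else if j.val = p.val ∧ ¬ j.val < k then (cond x (-1) 1) else 0)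
      else if j'.val = p.val then
        (if j.val = n then (if j'.val < k then 0 else cond x (-1:ℝ) 1)
         else if j.val = j'.val then (if j.val < k then -1 else 1) else 0)
      else 0 := by
  obtain ⟨h1, h2, h3, h4, h5, h6⟩ := hg
  rw [h6 j' p x]
  cases x <;>
    simp only [Bool.cond_false, Bool.cond_true] <;>
    split_ifs <;>
      simp only [h6, lie_neg, lie_zero, map_zero, map_neg, Finsupp.coe_zero, Pi.zero_apply,
        Finsupp.neg_apply, Bool.cond_false, Bool.cond_true] <;>
      split_ifs <;>
      (try simp [Basis.repr_self_apply]) <;>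
      omega

lemma killing_basis' (u v : (Fin n × Bool) ⊕ Option (Fin (n + 1))) :
    killingForm ℝ g (b u) (b v) = ∑ i, b.repr ⁅b u, ⁅b v, b i⁆⁆ i := by
  haveI := Module.Finite.of_basis b
  rw [killingForm_apply_apply, LinearMap.trace_eq_matrix_trace ℝ b, Matrix.trace]
  simp [Matrix.diag, LinearMap.toMatrix_apply, LieAlgebra.ad_apply]

lemma kYY (hg : IsG3n2k n k b) (j j' : Fin (n + 1)) :
    killingForm ℝ g (b (Sum.inr (some j))) (b (Sum.inr (some j'))) =
      if j = j' then (if j.val = n then 2 * (n : ℝ) + 4 else if j.val < k then -2 else 2)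
      else 0 := by
  have hE := termE b hg
  obtain ⟨h1, h2, h3, h4, h5, h6⟩ := hg
  rw [killing_basis', Fintype.sum_sum_type]
  have hopt : ∑ o : Option (Fin (n + 1)),
      b.repr ⁅b (Sum.inr (some j)), ⁅b (Sum.inr (some j')), b (Sum.inr o)⁆⁆ (Sum.inr o) =
      if j.val = n ∧ j'.val = n then 4 else 0 := by
    rw [Fintype.sum_option]
    have hsome : ∀ o : Fin (n + 1),
        b.repr ⁅b (Sum.inr (some j)), ⁅b (Sum.inr (some j')), b (Sum.inr (some o))⁆⁆
          (Sum.inr (some o)) = 0 := by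
      intro o; rw [h4 j' o]; simp
    simp only [hsome, Finset.sum_const_zero, add_zero]
    rw [h5 j']
    by_cases hj' : j'.val = n
    · rw [if_pos hj', lie_smul, h5 j]
      by_cases hj : j.val = n
      · simp [hj, hj', Basis.repr_self_apply, two_smul]; norm_num
      · simp [hj, hj']
    · simp [hj']
  have hinl : ∑ p : Fin n × Bool,
      b.repr ⁅b (Sum.inr (some j)), ⁅b (Sum.inr (some j')), b (Sum.inl p)⁆⁆ (Sum.inl p) =
      if j = j' then (if j.val = n then 2 * (n : ℝ) else if j.val < k then -2 else 2)
      else 0 := by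
    rw [Fintype.sum_prod_type]
    simp only [hE, Fintype.sum_bool]
    by_cases hj'n : j'.val = n
    · by_cases hjn : j.val = n
      · have hjj : j = j' := Fin.ext (by omega)
        simp [hjn, hj'n, hjj, Finset.sum_const, nsmul_eq_mul]; ring
      · have hne : ¬ j = j' := fun h => hjn (h ▸ hj'n)
        rw [if_neg hne]
        simp only [hj'n, if_true, hjn, if_false]
        refine Finset.sum_eq_zero fun p _ => ?_
        split_ifs <;> norm_num
    · by_cases hjj' : j = j'
      · subst hjj'
        have hjlt : j.val < n := lt_of_le_of_ne (Nat.lt_succ_iff.mp j.isLt) hj'n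
        rw [if_pos rfl, if_neg hj'n]
        rw [Finset.sum_eq_single (⟨j.val, hjlt⟩ : Fin n)]
        · simp only [hj'n, if_false, if_pos rfl]
          split_ifs <;> norm_num
        · intro p _ hp
          have : ¬ j.val = p.val := by
            intro h; exact hp (by apply Fin.ext; simp [← h])
          simp [hj'n, this]
        · intro h; exact absurd (Finset.mem_univ _) h
      · have hvv : ¬ j.val = j'.val := fun h => hjj' (Fin.ext h)
        rw [if_neg hjj']
        refine Finset.sum_eq_zero fun p _ => ?_
        simp only [hj'n, if_false, hvv]
        split_ifs <;> norm_num
  rw [hinl, hopt]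
  by_cases hjj' : j = j'
  · subst hjj'
    by_cases hjn : j.val = n <;> simp [hjn] <;> ring
  · have : ¬ (j.val = n ∧ j'.val = n) := by
      rintro ⟨a, c⟩; exact hjj' (Fin.ext (by omega))
    simp [hjj', this]

lemma kSymm (x y : g) : killingForm ℝ g x y = killingForm ℝ g y x :=
  LieModule.traceForm_comm ℝ g g x y

lemma killing_expand (v : g) :
    killingForm ℝ g v v = ∑ i, ∑ i',
      b.repr v i * b.repr v i' * killingForm ℝ g (b i) (b i') := by
  conv_lhs => rw [← b.sum_repr v]
  simp only [map_sum, map_smul, LinearMap.sum_apply, LinearMap.smul_apply, smul_eq_mul,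
    Finset.mul_sum]
  refine Finset.sum_congr rfl fun i _ => Finset.sum_congr rfl fun i' _ => ?_
  rw [kSymm]
  ring

lemma card_filter_lt (m : ℕ) (hm : m ≤ n + 1) :
    (Finset.univ.filter (fun j : Fin (n + 1) => j.val < m)).card = m := by
  have : Finset.univ.filter (fun j : Fin (n + 1) => j.val < m)
      = Finset.map (Fin.castLEEmb hm) Finset.univ := by
    ext j
    simp only [Finset.mem_filter, Finset.mem_univ, true_and, Finset.mem_map, Fin.castLEEmb,
      Function.Embedding.coeFn_mk]
    constructor
    · intro hj; exact ⟨⟨j.val, hj⟩, by simp [Fin.ext_iff, Fin.castLE]⟩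
    · rintro ⟨i, -, rfl⟩; simpa using i.isLt
  rw [this, Finset.card_map, Finset.card_univ, Fintype.card_fin]

lemma card_bad (m : ℕ) (hm : m ≤ n + 1) :
    (Finset.univ.filter (fun i : (Fin n × Bool) ⊕ Option (Fin (n + 1)) =>
      ∃ j : Fin (n + 1), i = Sum.inr (some j) ∧ j.val < m)).card = m := by
  have himg : Finset.univ.filter (fun i : (Fin n × Bool) ⊕ Option (Fin (n + 1)) =>
      ∃ j : Fin (n + 1), i = Sum.inr (some j) ∧ j.val < m)
      = Finset.image (fun j : Fin (n + 1) =>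
          (Sum.inr (some j) : (Fin n × Bool) ⊕ Option (Fin (n + 1))))
        (Finset.univ.filter (fun j => j.val < m)) := by
    ext i
    simp only [Finset.mem_filter, Finset.mem_univ, true_and, Finset.mem_image]
    constructor
    · rintro ⟨j, rfl, hj⟩
      exact ⟨j, hj, rfl⟩
    · rintro ⟨j, hj, rfl⟩
      exact ⟨j, rfl, hj⟩
  rw [himg, Finset.card_image_of_injective _ (fun a a' h => by simpa using h),
    card_filter_lt m hm]

end G3n2kAux

open G3n2kAux

theorem g3n2k_pairwise_nonisomorphic (n : ℕ) (hn : 1 ≤ n) (k k' : ℕ)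
    (hk : k < k') (hk' : k' ≤ n)
    {g : Type} [LieRing g] [LieAlgebra ℝ g]
    (b : Basis ((Fin n × Bool) ⊕ Option (Fin (n + 1))) ℝ g) (hg : IsG3n2k n k b)
    {g' : Type} [LieRing g'] [LieAlgebra ℝ g']
    (b' : Basis ((Fin n × Bool) ⊕ Option (Fin (n + 1))) ℝ g') (hg' : IsG3n2k n k' b') :
    IsEmpty (g ≃ₗ⁅ℝ⁆ g') := by
  constructor
  intro e
  haveI : Module.Finite ℝ g := Module.Finite.of_basis b
  haveI : Module.Finite ℝ g' := Module.Finite.of_basis b'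
  classical
  -- the positive semidefinite part of g
  set TF : Finset ((Fin n × Bool) ⊕ Option (Fin (n + 1))) :=
    Finset.univ.filter
      (fun i => ¬ ∃ j : Fin (n + 1), i = Sum.inr (some j) ∧ j.val < k) with hTFdef
  set P : Submodule ℝ g := Submodule.span ℝ (b '' ↑TF) with hPdef
  -- the negative definite part of g'
  set BF : Finset ((Fin n × Bool) ⊕ Option (Fin (n + 1))) :=
    Finset.univ.filter
      (fun i => ∃ j : Fin (n + 1), i = Sum.inr (some j) ∧ j.val < k') with hBFdef
  set W' : Submodule ℝ g' := Submodule.span ℝ (b' '' ↑BF) with hW'def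
  set W : Submodule ℝ g := Submodule.map (e.symm.toLinearEquiv : g' →ₗ[ℝ] g) W' with hWdef
  -- κ is positive semidefinite on P
  have hgram0 : ∀ i i', i ∈ TF → i' ∈ TF → i ≠ i' →
      killingForm ℝ g (b i) (b i') = 0 := by
    rintro (p | (_ | j)) i' hi hi' hne
    · exact kX b hg _ _ (by simp)
    · exact kX b hg _ _ (by simp)
    · rcases i' with p' | (_ | j')
      · rw [kSymm]; exact kX b hg _ _ (by simp)
      · rw [kSymm]; exact kX b hg _ _ (by simp)
      · rw [kYY b hg j j', if_neg]
        intro h; exact hne (by rw [h])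
  have hdiag0 : ∀ i ∈ TF, 0 ≤ killingForm ℝ g (b i) (b i) := by
    rintro (p | (_ | j)) hi
    · rw [kX b hg _ _ (by simp)]
    · rw [kX b hg _ _ (by simp)]
    · have hjk : ¬ j.val < k := by
        rw [hTFdef] at hi
        simp only [Finset.mem_filter, Finset.mem_univ, true_and] at hi
        intro h; exact hi ⟨j, rfl, h⟩
      rw [kYY b hg j j, if_pos rfl]
      split_ifs with h1
      · positivity
      · norm_num
  have hP : ∀ v ∈ P, 0 ≤ killingForm ℝ g v v := by
    intro v hv
    have hsupp := b.mem_span_image.mp hv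
    rw [killing_expand b v]
    refine Finset.sum_nonneg fun i _ => ?_
    rw [Finset.sum_eq_single i]
    · by_cases hi : i ∈ TF
      · exact mul_nonneg (mul_self_nonneg _) (hdiag0 i hi)
      · have : b.repr v i = 0 := by
          by_contra h
          exact hi (hsupp (Finsupp.mem_support_iff.mpr h))
        simp [this]
    · intro i' _ hne
      by_cases hi : i ∈ TF
      · by_cases hi' : i' ∈ TF
        · rw [hgram0 i i' hi hi' (Ne.symm hne), mul_zero]
        · have : b.repr v i' = 0 := by
            by_contra h; exact hi' (hsupp (Finsupp.mem_support_iff.mpr h))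
          simp [this]
      · have : b.repr v i = 0 := by
          by_contra h; exact hi (hsupp (Finsupp.mem_support_iff.mpr h))
        simp [this]
    · intro h; exact absurd (Finset.mem_univ _) h
  -- κ' is negative definite on W'
  have hgram' : ∀ i i', i ∈ BF → i' ∈ BF →
      killingForm ℝ g' (b' i) (b' i') = if i = i' then -2 else 0 := by
    intro i i' hi hi'
    rw [hBFdef] at hi hi'
    simp only [Finset.mem_filter, Finset.mem_univ, true_and] at hi hi'
    obtain ⟨j, rfl, hj⟩ := hi
    obtain ⟨j', rfl, hj'⟩ := hi'
    rw [kYY b' hg' j j']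
    rcases eq_or_ne j j' with rfl | hne
    · rw [if_pos rfl, if_pos rfl, if_neg (by omega), if_pos (by omega)]
    · rw [if_neg hne, if_neg (by simp [hne])]
  have hW' : ∀ v ∈ W', v ≠ 0 → killingForm ℝ g' v v < 0 := by
    intro v hv hv0
    have hsupp := b'.mem_span_image.mp hv
    rw [killing_expand b' v]
    have hterm : ∀ i, ∑ i', b'.repr v i * b'.repr v i' * killingForm ℝ g' (b' i) (b' i')
        = b'.repr v i * b'.repr v i * (-2) := by
      intro i
      rw [Finset.sum_eq_single i]
      · by_cases hi : i ∈ BF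
        · rw [hgram' i i hi hi, if_pos rfl]
        · have : b'.repr v i = 0 := by
            by_contra h; exact hi (hsupp (Finsupp.mem_support_iff.mpr h))
          simp [this]
      · intro i' _ hne
        by_cases hi : i ∈ BF
        · by_cases hi' : i' ∈ BF
          · rw [hgram' i i' hi hi', if_neg (Ne.symm hne), mul_zero]
          · have : b'.repr v i' = 0 := by
              by_contra h; exact hi' (hsupp (Finsupp.mem_support_iff.mpr h))
            simp [this]
        · have : b'.repr v i = 0 := by
            by_contra h; exact hi (hsupp (Finsupp.mem_support_iff.mpr h))
          simp [this]
      · intro h; exact absurd (Finset.mem_univ _) h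
    simp only [hterm]
    obtain ⟨i0, hi0⟩ : ∃ i0, b'.repr v i0 ≠ 0 := by
      by_contra h
      push_neg at h
      exact hv0 (by simpa using b'.repr.map_eq_zero_iff.mp (Finsupp.ext h))
    have : ∑ i, b'.repr v i * b'.repr v i * (-2) < ∑ _i : ((Fin n × Bool) ⊕ Option (Fin (n+1))), (0:ℝ) := by
      refine Finset.sum_lt_sum (fun i _ => ?_) ⟨i0, Finset.mem_univ _, ?_⟩
      · nlinarith [mul_self_nonneg (b'.repr v i)]
      · nlinarith [(mul_self_pos.mpr hi0)]
    simpa using this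
  -- W and P intersect trivially
  have hdisj : W ⊓ P = ⊥ := by
    rw [Submodule.eq_bot_iff]
    rintro v ⟨hvW, hvP⟩
    by_contra hv0
    obtain ⟨w, hw, rfl⟩ := hvW
    have hw0 : w ≠ 0 := by
      intro h; apply hv0; simp [h, map_zero]
    have hlt : killingForm ℝ g' w w < 0 := hW' w hw hw0
    have heq := LieAlgebra.killingForm_of_equiv_apply (R := ℝ) e (e.symm w) (e.symm w)
    rw [e.apply_symm_apply] at heq
    have h0 : 0 ≤ killingForm ℝ g (e.symm w) (e.symm w) := hP _ hvP
    linarith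
  -- dimension count
  have hcard : Fintype.card ((Fin n × Bool) ⊕ Option (Fin (n + 1))) = 3 * n + 2 := by
    simp; omega
  have hrankg : finrank ℝ g = 3 * n + 2 := by
    rw [finrank_eq_card_basis b, hcard]
  have hBFcard : BF.card = k' := by
    rw [hBFdef, card_bad k' (by omega)]
  have hTFcard : TF.card = 3 * n + 2 - k := by
    have hsplit := Finset.card_filter_add_card_filter_not
      (s := (Finset.univ : Finset ((Fin n × Bool) ⊕ Option (Fin (n + 1)))))
      (p := fun i => ∃ j : Fin (n + 1), i = Sum.inr (some j) ∧ j.val < k)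
    rw [Finset.card_univ, hcard, card_bad k (by omega)] at hsplit
    rw [hTFdef]
    omega
  have hrankP : finrank ℝ P = 3 * n + 2 - k := by
    rw [hPdef]
    have himg : b '' ↑TF = Set.range (fun i : ↥(↑TF : Set ((Fin n × Bool) ⊕ Option (Fin (n + 1)))) => b ↑i) := by
      rw [Set.image_eq_range]
    have hli : LinearIndependent ℝ
        (fun i : ↥(↑TF : Set ((Fin n × Bool) ⊕ Option (Fin (n + 1)))) => b ↑i) :=
      b.linearIndependent.comp Subtype.val Subtype.val_injective
    rw [himg, finrank_span_eq_card hli]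
    have hc : Fintype.card ↥(↑TF : Set ((Fin n × Bool) ⊕ Option (Fin (n + 1)))) = TF.card := by
      simp
    rw [hc, hTFcard]
  have hrankW' : finrank ℝ W' = k' := by
    rw [hW'def]
    have himg : b' '' ↑BF = Set.range (fun i : ↥(↑BF : Set ((Fin n × Bool) ⊕ Option (Fin (n + 1)))) => b' ↑i) := by
      rw [Set.image_eq_range]
    have hli : LinearIndependent ℝ
        (fun i : ↥(↑BF : Set ((Fin n × Bool) ⊕ Option (Fin (n + 1)))) => b' ↑i) :=
      b'.linearIndependent.comp Subtype.val Subtype.val_injective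
    rw [himg, finrank_span_eq_card hli]
    have hc : Fintype.card ↥(↑BF : Set ((Fin n × Bool) ⊕ Option (Fin (n + 1)))) = BF.card := by
      simp
    rw [hc, hBFcard]
  have hrankW : finrank ℝ W = k' := by
    rw [hWdef, LinearEquiv.finrank_map_eq, hrankW']
  have hsum := Submodule.finrank_sup_add_finrank_inf_eq W P
  rw [hdisj, hrankW, hrankP] at hsum
  have hle : finrank ℝ ↥(W ⊔ P) ≤ 3 * n + 2 := hrankg ▸ Submodule.finrank_le _
  simp only [finrank_bot, add_zero] at hsum
  omega
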